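/- Let X be a strongly zero-dimensional metrizable topological space. Then card(X) ≤ 𝔠 if and only if there exists a strongly rigid metric d on X inducing the topology of X. -/

import Mathlib

/-- A metric on `X` (as a distance function) that induces the topology of `X`. -/
structure MetricOn (X : Type*) [TopologicalSpace X] where
  toFun : X → X → ℝ
  symm : ∀ x y, toFun x y = toFun y x
  refl : ∀ x, toFun x x = 0
  eq_of : ∀ x y, toFun x y = 0 → x = y
  triangle : ∀ x y z, toFun x z ≤ toFun x y + toFun y z
  isOpen_iff : ∀ s : Set X, IsOpen s ↔ ∀ x ∈ s, ∃ ε > 0, ∀ y, toFun x y < ε → y ∈ s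

/-- A metric is strongly rigid if `d(x,y) = d(u,v) ≠ 0` implies `{x,y} = {u,v}`. -/
def StronglyRigid {X : Type*} [TopologicalSpace X] (d : MetricOn X) : Prop :=
  ∀ x y u v : X, d.toFun x y = d.toFun u v → d.toFun x y ≠ 0 →
    ({x, y} : Set X) = ({u, v} : Set X)

/-- A space is strongly zero-dimensional if any two disjoint closed sets are separated
by a clopen set. -/
def StronglyZeroDim (X : Type*) [TopologicalSpace X] : Prop :=
  ∀ A B : Set X, IsClosed A → IsClosed B → A ∩ B = ∅ →
    ∃ V : Set X, IsClopen V ∧ A ⊆ V ∧ V ∩ B = ∅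

open Set Function
set_option linter.unusedSectionVars false

namespace Stmt11


noncomputable section

open Classical in
/-- digit weight -/
def w (D : ℕ → Prop) (j : ℕ) : ℝ := if D j then (1/4 : ℝ)^j else 0

lemma w_nonneg (D : ℕ → Prop) (j : ℕ) : 0 ≤ w D j := by
  unfold w; split
  · positivity
  · exact le_rfl

lemma w_le (D : ℕ → Prop) (j : ℕ) : w D j ≤ (1/4:ℝ)^j := by
  unfold w; split
  · exact le_rfl
  · positivity

lemma w_congr {D₁ D₂ : ℕ → Prop} {j : ℕ} (h : D₁ j ↔ D₂ j) : w D₁ j = w D₂ j := by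
  unfold w
  by_cases hD : D₁ j
  · rw [if_pos hD, if_pos (h.1 hD)]
  · rw [if_neg hD, if_neg (fun hD2 => hD (h.2 hD2))]

lemma summable_quarter : Summable (fun j : ℕ => (1/4:ℝ)^j) :=
  summable_geometric_of_lt_one (by norm_num) (by norm_num)

lemma summable_w (D : ℕ → Prop) : Summable (w D) :=
  Summable.of_nonneg_of_le (w_nonneg D) (w_le D) summable_quarter

/-- digit sum -/
def eps (D : ℕ → Prop) : ℝ := ∑' j, w D j

lemma eps_nonneg (D : ℕ → Prop) : 0 ≤ eps D := tsum_nonneg (w_nonneg D)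

lemma tsum_shift_le (f : ℕ → ℝ) (m : ℕ) (hle : ∀ j, f j ≤ (1/4:ℝ)^j) (hs : Summable f) :
    ∑' j, f (j + m) ≤ 2 * (1/4:ℝ)^m := by
  have h2 : ∑' j : ℕ, f (j + m) ≤ ∑' j : ℕ, (1/4:ℝ)^(j+m) := by
    refine Summable.tsum_le_tsum (fun j => hle _) ?_ ?_
    · exact (summable_nat_add_iff m).2 hs
    · simpa [pow_add] using summable_quarter.mul_right ((1/4:ℝ)^m)
  refine h2.trans ?_
  have h3 : ∑' j : ℕ, (1/4:ℝ)^(j+m) = (∑' j : ℕ, (1/4:ℝ)^j) * (1/4)^m := by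
    simp_rw [pow_add]
    exact tsum_mul_right
  rw [h3, tsum_geometric_of_lt_one (by norm_num) (by norm_num)]
  have : (0:ℝ) ≤ (1/4:ℝ)^m := by positivity
  nlinarith

lemma tsum_tail_le (f : ℕ → ℝ) (m : ℕ) (hf : ∀ j, f j ≤ (1/4:ℝ)^j)
    (h0 : ∀ j < m, f j = 0) (hs : Summable f) : ∑' j, f j ≤ 2 * (1/4:ℝ)^m := by
  have h1 : ∑' j, f j = ∑' j, f (j + m) := by
    refine (Function.Injective.tsum_eq (g := fun j => j + m) (add_left_injective m) ?_).symm
    intro x hx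
    have hxm : ¬ x < m := fun hlt => hx (h0 x hlt)
    exact ⟨x - m, by show x - m + m = x; omega⟩
  rw [h1]
  exact tsum_shift_le f m hf hs

lemma eps_diff_le (D₁ D₂ : ℕ → Prop) (m : ℕ) (h : ∀ j < m, (D₁ j ↔ D₂ j)) :
    |eps D₁ - eps D₂| ≤ 2 * (1/4:ℝ)^m := by
  have hsub : eps D₁ - eps D₂ = ∑' j, (w D₁ j - w D₂ j) :=
    (Summable.tsum_sub (summable_w D₁) (summable_w D₂)).symm
  rw [hsub]
  have hs : Summable (fun j => w D₁ j - w D₂ j) := (summable_w D₁).sub (summable_w D₂)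
  calc |∑' j, (w D₁ j - w D₂ j)| ≤ ∑' j, |w D₁ j - w D₂ j| := by
        simpa using norm_tsum_le_tsum_norm (f := fun j => w D₁ j - w D₂ j) (by simpa using hs.abs)
      _ ≤ 2 * (1/4:ℝ)^m := by
        refine tsum_tail_le _ m (fun j => ?_) (fun j hj => ?_) hs.abs
        · have h1 := w_nonneg D₁ j; have h2 := w_nonneg D₂ j
          have h3 := w_le D₁ j; have h4 := w_le D₂ j
          rw [abs_sub_le_iff]; constructor <;> linarith
        · rw [w_congr (h j hj), sub_self, abs_zero]

lemma eps_le (D : ℕ → Prop) (m : ℕ) (h : ∀ j < m, ¬ D j) : eps D ≤ 2 * (1/4:ℝ)^m := by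
  have h1 := eps_diff_le D (fun _ => False) m (by intro j hj; simp [h j hj])
  have h0 : eps (fun _ => False) = 0 := by
    unfold eps w; simp
  rw [h0, sub_zero] at h1
  exact le_trans (le_abs_self _) h1

lemma eps_lt (D₁ D₂ : ℕ → Prop) (m : ℕ) (h : ∀ j < m, (D₁ j ↔ D₂ j)) (h1 : D₁ m) (h2 : ¬ D₂ m) :
    eps D₂ < eps D₁ := by
  have key : ∀ D : ℕ → Prop, eps D = (∑ j ∈ Finset.range (m+1), w D j) + ∑' j, w D (j + (m+1)) :=
    fun D => ((summable_w D).sum_add_tsum_nat_add (m+1)).symm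
  rw [key D₁, key D₂]
  have hsum : ∑ j ∈ Finset.range (m+1), w D₂ j + (1/4:ℝ)^m ≤ ∑ j ∈ Finset.range (m+1), w D₁ j := by
    rw [Finset.sum_range_succ, Finset.sum_range_succ]
    have e2 : ∑ j ∈ Finset.range m, w D₁ j = ∑ j ∈ Finset.range m, w D₂ j :=
      Finset.sum_congr rfl (fun j hj => w_congr (h j (Finset.mem_range.1 hj)))
    have e3 : w D₁ m = (1/4:ℝ)^m := by unfold w; rw [if_pos h1]
    have e4 : w D₂ m = 0 := by unfold w; rw [if_neg h2]
    rw [e2, e3, e4]; linarith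
  have ht1 : ∑' j, w D₂ (j + (m+1)) ≤ 2 * (1/4:ℝ)^(m+1) :=
    tsum_shift_le (w D₂) (m+1) (w_le D₂) (summable_w D₂)
  have ht2 : 0 ≤ ∑' j, w D₁ (j + (m+1)) := tsum_nonneg (fun j => w_nonneg _ _)
  have hq : 2 * (1/4:ℝ)^(m+1) < (1/4:ℝ)^m := by
    rw [pow_succ]
    have : (0:ℝ) < (1/4:ℝ)^m := by positivity
    nlinarith
  linarith

lemma eps_inj (D₁ D₂ : ℕ → Prop) (h : eps D₁ = eps D₂) : ∀ j, D₁ j ↔ D₂ j := by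
  by_contra hc
  rw [not_forall] at hc
  have hex : ∃ j, ¬ (D₁ j ↔ D₂ j) := hc
  classical
  have hmin : ∀ j < Nat.find hex, (D₁ j ↔ D₂ j) := fun j hj => not_not.1 (Nat.find_min hex hj)
  have hspec : ¬ (D₁ (Nat.find hex) ↔ D₂ (Nat.find hex)) := Nat.find_spec hex
  by_cases hd1 : D₁ (Nat.find hex)
  · have hd2 : ¬ D₂ (Nat.find hex) := fun h2 => hspec ⟨fun _ => h2, fun _ => hd1⟩
    exact absurd h (eps_lt D₁ D₂ (Nat.find hex) hmin hd1 hd2).ne'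
  · have hd2 : D₂ (Nat.find hex) := by
      by_contra h2
      exact hspec ⟨fun h1' => absurd h1' hd1, fun h2' => absurd h2' h2⟩
    exact absurd h (eps_lt D₂ D₁ (Nat.find hex) (fun j hj => (hmin j hj).symm) hd2 hd1).ne



variable {X : Type} [MetricSpace X]

lemma exists_partition (hX : StronglyZeroDim X) {r : ℝ} (hr : 0 < r) :
    ∃ f : X → Set X, (∀ x, IsClopen (f x)) ∧ (∀ x, x ∈ f x) ∧
      (∀ x y, y ∈ f x → f x = f y) ∧ ∀ x y, f x = f y → dist x y < 2 * r := by
  classical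
  set u : X → Set X := fun c => Metric.ball c r with hu
  have huo : ∀ c, IsOpen (u c) := fun c => Metric.isOpen_ball
  have huc : ⋃ c, u c = univ := by
    ext x; simp only [mem_iUnion, mem_univ, iff_true]
    exact ⟨x, Metric.mem_ball_self hr⟩
  obtain ⟨v, vo, vU, vlf, vu⟩ := precise_refinement u huo huc
  obtain ⟨s, sU, so, scl⟩ := exists_subset_iUnion_closure_subset isClosed_univ vo
    (fun x _ => vlf.point_finite x) (by rw [vU])
  have hW : ∀ i, ∃ W : Set X, IsClopen W ∧ closure (s i) ⊆ W ∧ W ⊆ v i := by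
    intro i
    obtain ⟨W, hW, h1, h2⟩ := hX (closure (s i)) (v i)ᶜ isClosed_closure (vo i).isClosed_compl
      (by
        rw [eq_empty_iff_forall_notMem]
        rintro x ⟨hx1, hx2⟩
        exact hx2 (scl i hx1))
    refine ⟨W, hW, h1, fun x hx => ?_⟩
    by_contra hxv
    exact (eq_empty_iff_forall_notMem.1 h2 x) ⟨hx, hxv⟩
  choose W hWclopen hWsub hWv using hW
  have hWlf : LocallyFinite W := vlf.subset hWv
  have hWcov : ∀ x : X, ∃ i, x ∈ W i := by
    intro x
    obtain ⟨i, hi⟩ := mem_iUnion.1 (sU (mem_univ x))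
    exact ⟨i, hWsub i (subset_closure hi)⟩
  -- well-order the index type
  letI R : X → X → Prop := WellOrderingRel
  have wf : WellFounded R := (IsWellFounded.wf : WellFounded WellOrderingRel)
  set T : X → Set X := fun i => W i \ ⋃ (j : {j // R j i}), W j.1 with hT
  have hTclopen : ∀ i, IsClopen (T i) := by
    intro i
    refine (hWclopen i).diff ?_
    constructor
    · exact (hWlf.comp_injective Subtype.val_injective).isClosed_iUnion
        (fun j => (hWclopen j.1).isClosed)
    · exact isOpen_iUnion (fun j => (hWclopen j.1).isOpen)
  set mx : X → X := fun x => wf.min {i | x ∈ W i} ⟨_, (hWcov x).choose_spec⟩ with hmx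
  have hmx_mem : ∀ x, x ∈ W (mx x) := fun x => wf.min_mem {i | x ∈ W i} _
  have hmx_min : ∀ x j, R j (mx x) → x ∉ W j := by
    intro x j hj hx
    exact wf.not_lt_min {i | x ∈ W i} hx hj
  refine ⟨fun x => T (mx x), fun x => hTclopen _, ?_, ?_, ?_⟩
  · intro x
    refine ⟨hmx_mem x, ?_⟩
    rw [mem_iUnion]
    rintro ⟨⟨j, hj⟩, hxj⟩
    exact hmx_min x j hj hxj
  · intro x y hy
    have hyW : y ∈ W (mx x) := hy.1
    have hynot : ∀ j, R j (mx x) → y ∉ W j := by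
      intro j hj hyj
      apply hy.2
      rw [mem_iUnion]
      exact ⟨⟨j, hj⟩, hyj⟩
    have : mx y = mx x := by
      rcases trichotomous_of R (mx y) (mx x) with h | h | h
      · exact absurd (hmx_mem y) (hynot _ h)
      · exact h
      · exact absurd hyW (fun hyW' => (wf.not_lt_min {i | y ∈ W i} hyW') h)
    show T (mx x) = T (mx y)
    rw [this]
  · intro x y hxy
    have hx : x ∈ W (mx x) := hmx_mem x
    have hxy' : T (mx x) = T (mx y) := hxy
    have hy : y ∈ T (mx x) := by
      rw [hxy']
      exact ⟨hmx_mem y, by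
        rw [mem_iUnion]
        rintro ⟨⟨j, hj⟩, hyj⟩
        exact hmx_min y j hj hyj⟩
    have hxu : x ∈ u (mx x) := vu _ (hWv _ hx)
    have hyu : y ∈ u (mx x) := vu _ (hWv _ hy.1)
    rw [hu] at hxu hyu
    simp only [Metric.mem_ball] at hxu hyu
    calc dist x y ≤ dist x (mx x) + dist (mx x) y := dist_triangle _ _ _
      _ < r + r := by rw [dist_comm (mx x) y] at *; exact add_lt_add hxu hyu
      _ = 2 * r := by ring



section Main

variable {X : Type} [MetricSpace X] [Nonempty X]
variable (F : ℕ → X → Set X)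

/-- cell at level `k` -/
def S (k : ℕ) (x : X) : Set X := {y | ∀ j ≤ k, F j x = F j y}

/-- representative of the cell at level `k` -/
noncomputable def rp (k : ℕ) (x : X) : X := Classical.epsilon (· ∈ S F k x)

open Classical in
/-- separation level -/
noncomputable def lvl (x y : X) : ℕ := if h : ∃ j, F j x ≠ F j y then Nat.find h else 0

variable {F}

lemma mem_S_self (k : ℕ) (x : X) : x ∈ S F k x := fun _ _ => rfl

lemma S_eq {k : ℕ} {x y : X} (h : y ∈ S F k x) : S F k x = S F k y := by
  ext z
  constructor
  · intro hz j hj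
    exact (h j hj).symm.trans (hz j hj)
  · intro hz j hj
    exact (h j hj).trans (hz j hj)

lemma rp_mem (k : ℕ) (x : X) : rp F k x ∈ S F k x :=
  Classical.epsilon_spec (p := (· ∈ S F k x)) ⟨x, mem_S_self k x⟩

lemma rp_eq {k : ℕ} {x y : X} (h : y ∈ S F k x) : rp F k x = rp F k y := by
  unfold rp
  rw [S_eq h]

lemma rel_of_rp_eq {k : ℕ} {x y : X} (h : rp F k x = rp F k y) : ∀ j ≤ k, F j x = F j y := by
  intro j hj
  have h1 : rp F k x ∈ S F k x := rp_mem k x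
  have h2 : rp F k x ∈ S F k y := h ▸ rp_mem k y
  exact (h1 j hj).trans (h2 j hj).symm

lemma lvl_spec {x y : X} (h : ∃ j, F j x ≠ F j y) :
    F (lvl F x y) x ≠ F (lvl F x y) y := by
  unfold lvl
  classical
  rw [dif_pos h]
  exact Nat.find_spec h

lemma lvl_min {x y : X} (h : ∃ j, F j x ≠ F j y) {j : ℕ} (hj : j < lvl F x y) :
    F j x = F j y := by
  unfold lvl at hj
  classical
  rw [dif_pos h] at hj
  exact not_not.1 (Nat.find_min h hj)

lemma lvl_symm (x y : X) : lvl F x y = lvl F y x := by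
  unfold lvl
  classical
  by_cases h : ∃ j, F j x ≠ F j y
  · have h' : ∃ j, F j y ≠ F j x := h.imp fun j hj => hj.symm
    rw [dif_pos h, dif_pos h']
    exact le_antisymm (Nat.find_le (Nat.find_spec h').symm) (Nat.find_le (Nat.find_spec h).symm)
  · have h' : ¬ ∃ j, F j y ≠ F j x := fun hc => h (hc.imp fun j hj => hj.symm)
    rw [dif_neg h, dif_neg h']

end Main

section Main2

variable {X : Type} [MetricSpace X] [Nonempty X]
variable (F : ℕ → X → Set X) (EE : X → X → ℕ → Bool)

/-- digit predicate attached to a pair -/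
def Dig (x y : X) : ℕ → Prop := fun jj =>
  ∃ k i : ℕ, Nat.pair k i + 2 = jj ∧ lvl F x y ≤ k ∧ EE (rp F k x) (rp F k y) i = true

open Classical in
/-- the strongly rigid distance -/
noncomputable def dd (x y : X) : ℝ :=
  if x = y then 0 else (1/2:ℝ)^(lvl F x y) + eps (Dig F EE x y)

variable {F EE}

lemma half_pow_le {m n : ℕ} (h : m ≤ n) : (1/2:ℝ)^n ≤ (1/2)^m :=
  pow_le_pow_of_le_one (by norm_num) (by norm_num) h

lemma quarter_le_half (n : ℕ) : (1/4:ℝ)^n ≤ (1/2)^n :=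
  pow_le_pow_left₀ (by norm_num) (by norm_num) n

lemma Dig_symm (hEs : ∀ a b, EE a b = EE b a) (x y : X) : Dig F EE x y = Dig F EE y x := by
  funext jj
  apply propext
  constructor
  · rintro ⟨k, i, h1, h2, h3⟩
    exact ⟨k, i, h1, by rwa [lvl_symm], by rwa [hEs]⟩
  · rintro ⟨k, i, h1, h2, h3⟩
    exact ⟨k, i, h1, by rwa [lvl_symm], by rwa [hEs]⟩

lemma Dig_ge {x y : X} {jj : ℕ} (hD : Dig F EE x y jj) : lvl F x y + 2 ≤ jj := by
  obtain ⟨k, i, h1, h2, _⟩ := hD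
  have := Nat.left_le_pair k i
  omega

lemma eps_Dig_le (x y : X) : eps (Dig F EE x y) ≤ (1/8) * (1/2:ℝ)^(lvl F x y) := by
  have h := eps_le (Dig F EE x y) (lvl F x y + 2) (fun j hj hD => by have := Dig_ge hD; omega)
  refine h.trans ?_
  have h1 : (1/4:ℝ)^(lvl F x y + 2) = (1/4)^(lvl F x y) * (1/16) := by
    rw [pow_add]; norm_num
  rw [h1]
  have h2 := quarter_le_half (lvl F x y)
  nlinarith [pow_nonneg (by norm_num : (0:ℝ) ≤ 1/4) (lvl F x y)]

lemma dd_self (x : X) : dd F EE x x = 0 := if_pos rfl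

lemma dd_lower {x y : X} (hne : x ≠ y) : (1/2:ℝ)^(lvl F x y) ≤ dd F EE x y := by
  unfold dd
  rw [if_neg hne]
  linarith [eps_nonneg (Dig F EE x y)]

lemma dd_upper {x y : X} (hne : x ≠ y) : dd F EE x y ≤ (9/8) * (1/2:ℝ)^(lvl F x y) := by
  unfold dd
  rw [if_neg hne]
  linarith [eps_Dig_le (F := F) (EE := EE) x y]

lemma dd_pos {x y : X} (hne : x ≠ y) : 0 < dd F EE x y :=
  lt_of_lt_of_le (by positivity) (dd_lower hne)

lemma dd_nonneg (x y : X) : 0 ≤ dd F EE x y := by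
  by_cases h : x = y
  · rw [h, dd_self]
  · exact (dd_pos h).le

lemma dd_symm (hEs : ∀ a b, EE a b = EE b a) (x y : X) : dd F EE x y = dd F EE y x := by
  unfold dd
  by_cases h : x = y
  · rw [if_pos h, if_pos h.symm]
  · rw [if_neg h, if_neg (Ne.symm h), lvl_symm, Dig_symm hEs]

lemma eps_close {x y u v : X}
    (hl : lvl F x y = lvl F u v) (m : ℕ)
    (hm : ∀ k < m, rp F k x = rp F k u ∧ rp F k y = rp F k v) :
    |eps (Dig F EE x y) - eps (Dig F EE u v)| ≤ 2 * (1/4:ℝ)^(m+2) := by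
  apply eps_diff_le
  intro jj hjj
  constructor
  · rintro ⟨k, i, h1, h2, h3⟩
    have hk : k < m := by have := Nat.left_le_pair k i; omega
    exact ⟨k, i, h1, hl ▸ h2, by rw [← (hm k hk).1, ← (hm k hk).2]; exact h3⟩
  · rintro ⟨k, i, h1, h2, h3⟩
    have hk : k < m := by have := Nat.left_le_pair k i; omega
    exact ⟨k, i, h1, hl.symm ▸ h2, by rw [(hm k hk).1, (hm k hk).2]; exact h3⟩

lemma small_bound (b : ℕ) : 2*(1/4:ℝ)^(b+2) ≤ (1/2)^b := by
  have h1 : (1/4:ℝ)^(b+2) = (1/4)^b * (1/16) := by rw [pow_add]; norm_num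
  have h2 := quarter_le_half b
  have h3 : (0:ℝ) ≤ (1/4)^b := by positivity
  nlinarith

end Main2

section Main3

variable {X : Type} [MetricSpace X] [Nonempty X]
variable {F : ℕ → X → Set X} {EE : X → X → ℕ → Bool}

lemma hex_of_ne (hsmall : ∀ (k : ℕ) (x y : X), F k x = F k y → dist x y < (1/2:ℝ)^k)
    {x y : X} (hne : x ≠ y) : ∃ j, F j x ≠ F j y := by
  have hd : 0 < dist x y := dist_pos.2 hne
  obtain ⟨j, hj⟩ := exists_pow_lt_of_lt_one hd (by norm_num : (1/2:ℝ) < 1)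
  exact ⟨j, fun h => absurd (hsmall j x y h) (not_lt.2 hj.le)⟩

lemma eq_of_forall (hsmall : ∀ (k : ℕ) (x y : X), F k x = F k y → dist x y < (1/2:ℝ)^k)
    {x y : X} (h : ∀ j, F j x = F j y) : x = y := by
  by_contra hne
  obtain ⟨j, hj⟩ := hex_of_ne hsmall hne
  exact hj (h j)

lemma endgame (hsmall : ∀ (k : ℕ) (x y : X), F k x = F k y → dist x y < (1/2:ℝ)^k)
    {x y u v : X} (n : ℕ)
    (hrne : rp F n x ≠ rp F n y)
    (hpairs : ∀ k, n ≤ k → ({rp F k x, rp F k y} : Set X) = {rp F k u, rp F k v})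
    (hux : rp F n u = rp F n x) : u = x ∧ v = y := by
  have hrep : ∀ k, n ≤ k → rp F k x = rp F k u ∧ rp F k y = rp F k v := by
    intro k hk
    rcases Set.pair_eq_pair_iff.1 (hpairs k hk) with ⟨h1, h2⟩ | ⟨h1, h2⟩
    · exact ⟨h1, h2⟩
    · exfalso
      have hyu : ∀ j ≤ k, F j y = F j u := rel_of_rp_eq h2
      have h3 : rp F n y = rp F n u := rp_eq (fun j hj => hyu j (hj.trans hk))
      exact hrne ((h3.trans hux).symm)
  have hu : u = x := by
    refine eq_of_forall hsmall (fun j => ?_)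
    have hr := (hrep (max n j) (le_max_left n j)).1
    exact (rel_of_rp_eq hr j (le_max_right n j)).symm
  have hv : v = y := by
    refine eq_of_forall hsmall (fun j => ?_)
    have hr := (hrep (max n j) (le_max_left n j)).2
    exact (rel_of_rp_eq hr j (le_max_right n j)).symm
  exact ⟨hu, hv⟩

lemma lvl_lt_absurd {x y u v : X} (hxy : x ≠ y) (huv : u ≠ v)
    (heq : dd F EE x y = dd F EE u v) (h : lvl F x y < lvl F u v) : False := by
  have h1 : dd F EE u v ≤ (9/8) * (1/2:ℝ)^(lvl F u v) := dd_upper huv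
  have h2 : (1/2:ℝ)^(lvl F x y) ≤ dd F EE x y := dd_lower hxy
  have h3 : (1/2:ℝ)^(lvl F u v) ≤ (1/2)^(lvl F x y + 1) := half_pow_le h
  have h4 : (1/2:ℝ)^(lvl F x y + 1) = (1/2) * (1/2)^(lvl F x y) := by rw [pow_succ]; ring
  have h5 : (0:ℝ) < (1/2)^(lvl F x y) := by positivity
  rw [heq] at h2
  nlinarith

lemma dd_rigid (hsmall : ∀ (k : ℕ) (x y : X), F k x = F k y → dist x y < (1/2:ℝ)^k)
    (hEi : ∀ a b c d : X, EE a b = EE c d → ({a, b} : Set X) = {c, d})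
    {x y u v : X} (heq : dd F EE x y = dd F EE u v) (hne0 : dd F EE x y ≠ 0) :
    ({x, y} : Set X) = {u, v} := by
  have hxy : x ≠ y := fun h => hne0 (h ▸ dd_self x)
  have huv : u ≠ v := fun h => by rw [heq, h, dd_self] at hne0; exact hne0 rfl
  have hexy := hex_of_ne hsmall hxy
  have hab : lvl F x y = lvl F u v := by
    rcases lt_trichotomy (lvl F x y) (lvl F u v) with h | h | h
    · exact (lvl_lt_absurd hxy huv heq h).elim
    · exact h
    · exact (lvl_lt_absurd huv hxy heq.symm h).elim
  have heps : eps (Dig F EE x y) = eps (Dig F EE u v) := by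
    have h1 : dd F EE x y = (1/2:ℝ)^(lvl F x y) + eps (Dig F EE x y) := by
      unfold dd; rw [if_neg hxy]
    have h2 : dd F EE u v = (1/2:ℝ)^(lvl F u v) + eps (Dig F EE u v) := by
      unfold dd; rw [if_neg huv]
    rw [h1, h2, ← hab] at heq
    linarith
  have hDig := eps_inj _ _ heps
  have hdigits : ∀ k, lvl F x y ≤ k → EE (rp F k x) (rp F k y) = EE (rp F k u) (rp F k v) := by
    intro k hk
    funext i
    have hiff := hDig (Nat.pair k i + 2)
    have hfwd : Dig F EE x y (Nat.pair k i + 2) ↔ EE (rp F k x) (rp F k y) i = true := by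
      constructor
      · rintro ⟨k', i', h1, h2, h3⟩
        obtain ⟨rfl, rfl⟩ := Nat.pair_eq_pair.1 (by omega : Nat.pair k' i' = Nat.pair k i)
        exact h3
      · intro h3
        exact ⟨k, i, rfl, hk, h3⟩
    have hbwd : Dig F EE u v (Nat.pair k i + 2) ↔ EE (rp F k u) (rp F k v) i = true := by
      constructor
      · rintro ⟨k', i', h1, h2, h3⟩
        obtain ⟨rfl, rfl⟩ := Nat.pair_eq_pair.1 (by omega : Nat.pair k' i' = Nat.pair k i)
        exact h3
      · intro h3
        exact ⟨k, i, rfl, hab ▸ hk, h3⟩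
    have hEiff : EE (rp F k x) (rp F k y) i = true ↔ EE (rp F k u) (rp F k v) i = true :=
      hfwd.symm.trans (hiff.trans hbwd)
    cases hEx : EE (rp F k x) (rp F k y) i <;> cases hEu : EE (rp F k u) (rp F k v) i <;>
      simp_all
  have hpairs : ∀ k, lvl F x y ≤ k →
      ({rp F k x, rp F k y} : Set X) = {rp F k u, rp F k v} :=
    fun k hk => hEi _ _ _ _ (hdigits k hk)
  have hrne : rp F (lvl F x y) x ≠ rp F (lvl F x y) y :=
    fun h => lvl_spec hexy (rel_of_rp_eq h (lvl F x y) le_rfl)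
  rcases Set.pair_eq_pair_iff.1 (hpairs (lvl F x y) le_rfl) with ⟨h1, h2⟩ | ⟨h1, h2⟩
  · obtain ⟨hu, hv⟩ := endgame hsmall (lvl F x y) hrne hpairs h1.symm
    rw [hu, hv]
  · have hpairs' : ∀ k, lvl F x y ≤ k →
        ({rp F k x, rp F k y} : Set X) = {rp F k v, rp F k u} :=
      fun k hk => (hpairs k hk).trans (Set.pair_comm _ _)
    obtain ⟨hv, hu⟩ := endgame hsmall (lvl F x y) hrne hpairs' h1.symm
    rw [hu, hv]
    exact Set.pair_comm x y

lemma dd_triangle (hsmall : ∀ (k : ℕ) (x y : X), F k x = F k y → dist x y < (1/2:ℝ)^k)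
    (x y z : X) : dd F EE x z ≤ dd F EE x y + dd F EE y z := by
  by_cases hxz : x = z
  · rw [hxz, dd_self]
    exact add_nonneg (dd_nonneg _ _) (dd_nonneg _ _)
  by_cases hxy : x = y
  · subst hxy
    rw [dd_self, zero_add]
  by_cases hyz : y = z
  · subst hyz
    rw [dd_self, add_zero]
  have hexy := hex_of_ne hsmall hxy
  have heyz := hex_of_ne hsmall hyz
  have hexz := hex_of_ne hsmall hxz
  have hminc : min (lvl F x y) (lvl F y z) ≤ lvl F x z := by
    by_contra h
    push_neg at h
    have h1 : F (lvl F x z) x = F (lvl F x z) y :=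
      lvl_min hexy (lt_of_lt_of_le h (min_le_left _ _))
    have h2 : F (lvl F x z) y = F (lvl F x z) z :=
      lvl_min heyz (lt_of_lt_of_le h (min_le_right _ _))
    exact lvl_spec hexz (h1.trans h2)
  have hupper : dd F EE x z ≤ (9/8) * (1/2:ℝ)^(lvl F x z) := dd_upper hxz
  have hpos : ∀ m : ℕ, (0:ℝ) < (1/2)^m := fun m => by positivity
  rcases eq_or_lt_of_le hminc with hc | hc
  · -- lvl F x z = min
    rcases lt_trichotomy (lvl F x y) (lvl F y z) with hab | hab | hab
    · -- a < b, c = a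
      have hca : lvl F x z = lvl F x y := by rw [← hc, min_eq_left hab.le]
      have hclose : |eps (Dig F EE x z) - eps (Dig F EE x y)| ≤ 2*(1/4:ℝ)^(lvl F y z + 2) := by
        refine eps_close hca (lvl F y z) (fun k hk => ⟨rfl, ?_⟩)
        exact rp_eq (fun j hj => (lvl_min heyz (lt_of_le_of_lt hj hk)).symm)
      have h1 : dd F EE x z = (1/2:ℝ)^(lvl F x y) + eps (Dig F EE x z) := by
        unfold dd; rw [if_neg hxz, hca]
      have h2 : dd F EE x y = (1/2:ℝ)^(lvl F x y) + eps (Dig F EE x y) := by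
        unfold dd; rw [if_neg hxy]
      have h3 : (1/2:ℝ)^(lvl F y z) ≤ dd F EE y z := dd_lower hyz
      have h4 := small_bound (lvl F y z)
      have h5 : eps (Dig F EE x z) - eps (Dig F EE x y) ≤ 2*(1/4:ℝ)^(lvl F y z + 2) :=
        (le_abs_self _).trans hclose
      linarith
    · -- a = b, c = a
      have hca : lvl F x z = lvl F x y := by rw [← hc, min_eq_left hab.le]
      have h3 : (1/2:ℝ)^(lvl F x y) ≤ dd F EE x y := dd_lower hxy
      have h4 : (1/2:ℝ)^(lvl F y z) ≤ dd F EE y z := dd_lower hyz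
      rw [hca] at hupper
      rw [← hab] at h4
      have := hpos (lvl F x y)
      linarith
    · -- b < a, c = b
      have hcb : lvl F x z = lvl F y z := by rw [← hc, min_eq_right hab.le]
      have hclose : |eps (Dig F EE x z) - eps (Dig F EE y z)| ≤ 2*(1/4:ℝ)^(lvl F x y + 2) := by
        refine eps_close hcb (lvl F x y) (fun k hk => ⟨?_, rfl⟩)
        exact rp_eq (fun j hj => lvl_min hexy (lt_of_le_of_lt hj hk))
      have h1 : dd F EE x z = (1/2:ℝ)^(lvl F y z) + eps (Dig F EE x z) := by
        unfold dd; rw [if_neg hxz, hcb]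
      have h2 : dd F EE y z = (1/2:ℝ)^(lvl F y z) + eps (Dig F EE y z) := by
        unfold dd; rw [if_neg hyz]
      have h3 : (1/2:ℝ)^(lvl F x y) ≤ dd F EE x y := dd_lower hxy
      have h4 := small_bound (lvl F x y)
      have h5 : eps (Dig F EE x z) - eps (Dig F EE y z) ≤ 2*(1/4:ℝ)^(lvl F x y + 2) :=
        (le_abs_self _).trans hclose
      linarith
  · -- min < c
    have h1 : (1/2:ℝ)^(lvl F x z) ≤ (1/2)^(min (lvl F x y) (lvl F y z) + 1) := half_pow_le hc
    have h2 : (1/2:ℝ)^(min (lvl F x y) (lvl F y z) + 1)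
        = (1/2) * (1/2)^(min (lvl F x y) (lvl F y z)) := by rw [pow_succ]; ring
    rcases le_total (lvl F x y) (lvl F y z) with hab | hab
    · have h3 : (1/2:ℝ)^(min (lvl F x y) (lvl F y z)) = (1/2)^(lvl F x y) := by
        rw [min_eq_left hab]
      have h4 : (1/2:ℝ)^(lvl F x y) ≤ dd F EE x y := dd_lower hxy
      have h5 : 0 ≤ dd F EE y z := dd_nonneg y z
      have := hpos (lvl F x y)
      nlinarith
    · have h3 : (1/2:ℝ)^(min (lvl F x y) (lvl F y z)) = (1/2)^(lvl F y z) := by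
        rw [min_eq_right hab]
      have h4 : (1/2:ℝ)^(lvl F y z) ≤ dd F EE y z := dd_lower hyz
      have h5 : 0 ≤ dd F EE x y := dd_nonneg x y
      have := hpos (lvl F y z)
      nlinarith

lemma S_eq_biInter (heqq : ∀ (k : ℕ) (x y : X), y ∈ F k x → F k x = F k y)
    (hmem : ∀ (k : ℕ) (x : X), x ∈ F k x) (k : ℕ) (x : X) :
    S F k x = ⋂ j ∈ Finset.range (k+1), F j x := by
  ext y
  simp only [Set.mem_iInter, Finset.mem_range, S, Set.mem_setOf_eq]
  constructor
  · intro h j hj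
    rw [h j (by omega)]
    exact hmem j y
  · intro h j hj
    exact heqq j x y (h j (by omega))

lemma isOpen_S (hclopen : ∀ (k : ℕ) (x : X), IsClopen (F k x))
    (heqq : ∀ (k : ℕ) (x y : X), y ∈ F k x → F k x = F k y)
    (hmem : ∀ (k : ℕ) (x : X), x ∈ F k x) (k : ℕ) (x : X) : IsOpen (S F k x) := by
  rw [S_eq_biInter heqq hmem]
  exact isOpen_biInter_finset fun j _ => (hclopen j x).isOpen

lemma dd_isOpen_iff (hsmall : ∀ (k : ℕ) (x y : X), F k x = F k y → dist x y < (1/2:ℝ)^k)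
    (hclopen : ∀ (k : ℕ) (x : X), IsClopen (F k x))
    (heqq : ∀ (k : ℕ) (x y : X), y ∈ F k x → F k x = F k y)
    (hmem : ∀ (k : ℕ) (x : X), x ∈ F k x) (s : Set X) :
    IsOpen s ↔ ∀ x ∈ s, ∃ ε > 0, ∀ y, dd F EE x y < ε → y ∈ s := by
  constructor
  · intro hs x hx
    rw [Metric.isOpen_iff] at hs
    obtain ⟨δ, hδ, hball⟩ := hs x hx
    obtain ⟨k, hk⟩ := exists_pow_lt_of_lt_one hδ (by norm_num : (1/2:ℝ) < 1)
    refine ⟨(1/2:ℝ)^k, by positivity, ?_⟩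
    intro y hy
    by_cases hxy : x = y
    · rwa [← hxy]
    · have h1 : (1/2:ℝ)^(lvl F x y) ≤ dd F EE x y := dd_lower hxy
      have h2 : (1/2:ℝ)^(lvl F x y) < (1/2)^k := lt_of_le_of_lt h1 hy
      have h3 : k < lvl F x y := by
        by_contra hcon
        push_neg at hcon
        exact absurd h2 (not_lt.2 (half_pow_le hcon))
      have h4 : F k x = F k y := lvl_min (hex_of_ne hsmall hxy) h3
      have h5 : dist x y < (1/2:ℝ)^k := hsmall k x y h4
      exact hball (by rw [Metric.mem_ball, dist_comm]; exact h5.trans hk)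
  · intro h
    rw [isOpen_iff_forall_mem_open]
    intro x hx
    obtain ⟨ε, hε, hcl⟩ := h x hx
    obtain ⟨k, hk⟩ := exists_pow_lt_of_lt_one hε (by norm_num : (1/2:ℝ) < 1)
    refine ⟨S F k x, ?_, isOpen_S hclopen heqq hmem k x, mem_S_self k x⟩
    intro y hy
    apply hcl
    by_cases hxy : x = y
    · rw [← hxy, dd_self]
      exact hε
    · have h3 : k < lvl F x y := by
        by_contra hcon
        push_neg at hcon
        exact lvl_spec (hex_of_ne hsmall hxy) (hy _ hcon)
      have h4 : dd F EE x y ≤ (9/8) * (1/2:ℝ)^(lvl F x y) := dd_upper hxy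
      have h5 : (1/2:ℝ)^(lvl F x y) ≤ (1/2)^(k+1) := half_pow_le h3
      have h6 : (1/2:ℝ)^(k+1) = (1/2)*(1/2)^k := by rw [pow_succ]; ring
      have h7 : (0:ℝ) < (1/2)^k := by positivity
      nlinarith

end Main3


lemma minmax {a b c d : ℝ} (h1 : min a b = min c d) (h2 : max a b = max c d) :
    (a = c ∧ b = d) ∨ (a = d ∧ b = c) := by
  rcases le_total a b with hab | hab <;> rcases le_total c d with hcd | hcd
  · rw [min_eq_left hab, min_eq_left hcd] at h1
    rw [max_eq_right hab, max_eq_right hcd] at h2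
    exact Or.inl ⟨h1, h2⟩
  · rw [min_eq_left hab, min_eq_right hcd] at h1
    rw [max_eq_right hab, max_eq_left hcd] at h2
    exact Or.inr ⟨h1, h2⟩
  · rw [min_eq_right hab, min_eq_left hcd] at h1
    rw [max_eq_left hab, max_eq_right hcd] at h2
    exact Or.inr ⟨h2, h1⟩
  · rw [min_eq_right hab, min_eq_right hcd] at h1
    rw [max_eq_left hab, max_eq_left hcd] at h2
    exact Or.inl ⟨h2, h1⟩

theorem exists_rigid {X : Type} [MetricSpace X] (hX : StronglyZeroDim X)
    (hcard : Cardinal.mk X ≤ Cardinal.continuum) : ∃ d : MetricOn X, StronglyRigid d := by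
  rcases isEmpty_or_nonempty X with hE | hN
  · refine ⟨⟨fun _ _ => 0, fun x => (hE.false x).elim, fun x => (hE.false x).elim,
      fun x => (hE.false x).elim, fun x => (hE.false x).elim, ?_⟩, fun x => (hE.false x).elim⟩
    intro s
    constructor
    · intro _ x hx
      exact (hE.false x).elim
    · intro _
      rw [Set.eq_empty_of_isEmpty s]
      exact isOpen_empty
  · have hpart : ∀ k : ℕ, ∃ f : X → Set X, (∀ x, IsClopen (f x)) ∧ (∀ x, x ∈ f x) ∧
        (∀ x y, y ∈ f x → f x = f y) ∧ ∀ x y, f x = f y → dist x y < (1/2:ℝ)^k := by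
      intro k
      obtain ⟨f, h1, h2, h3, h4⟩ := exists_partition hX (show (0:ℝ) < (1/2)^(k+1) by positivity)
      refine ⟨f, h1, h2, h3, fun x y h => ?_⟩
      have h5 := h4 x y h
      have h6 : 2 * ((1/2:ℝ))^(k+1) = (1/2)^k := by rw [pow_succ]; ring
      linarith
    choose F hFclopen hFmem hFeq hFsmall using hpart
    have hcard2 : Cardinal.mk X ≤ Cardinal.mk ℝ := by rw [Cardinal.mk_real]; exact hcard
    obtain ⟨ι⟩ := (Cardinal.le_def X ℝ).1 hcard2
    have hNB : Cardinal.mk (ℕ → Bool) = Cardinal.continuum := by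
      rw [Cardinal.mk_arrow, Cardinal.lift_id, Cardinal.lift_id, Cardinal.mk_bool,
        Cardinal.mk_nat]
      exact Cardinal.two_power_aleph0
    obtain ⟨em⟩ := (Cardinal.le_def ℝ (ℕ → Bool)).1 (by rw [Cardinal.mk_real, hNB])
    let pe : ((ℕ → Bool) × (ℕ → Bool)) ↪ (ℕ → Bool) :=
      ((Equiv.sumArrowEquivProdArrow ℕ ℕ Bool).symm.trans
        (Equiv.arrowCongr (Denumerable.eqv (ℕ ⊕ ℕ)) (Equiv.refl Bool))).toEmbedding
    let EE : X → X → ℕ → Bool := fun a b => pe (em (min (ι a) (ι b)), em (max (ι a) (ι b)))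
    have hEs : ∀ a b, EE a b = EE b a := by
      intro a b
      show pe (em (min (ι a) (ι b)), em (max (ι a) (ι b)))
        = pe (em (min (ι b) (ι a)), em (max (ι b) (ι a)))
      rw [min_comm, max_comm]
    have hEi : ∀ a b c d : X, EE a b = EE c d → ({a, b} : Set X) = {c, d} := by
      intro a b c d h
      have h1 := pe.injective h
      rw [Prod.mk.injEq] at h1
      have h2 := em.injective h1.1
      have h3 := em.injective h1.2
      rcases minmax h2 h3 with ⟨hac, hbd⟩ | ⟨had, hbc⟩
      · rw [ι.injective hac, ι.injective hbd]
      · obtain rfl := ι.injective had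
        obtain rfl := ι.injective hbc
        exact Set.pair_comm a b
    refine ⟨⟨dd F EE, dd_symm hEs, dd_self, ?_, dd_triangle hFsmall,
      dd_isOpen_iff hFsmall hFclopen hFeq hFmem⟩, ?_⟩
    · intro x y h
      by_contra hne
      exact absurd h (dd_pos hne).ne'
    · intro x y u v h1 h2
      exact dd_rigid hFsmall hEi h1 h2

end
end Stmt11

/-- A strongly zero-dimensional metrizable space `X` satisfies
`card X ≤ 𝔠` iff it admits a strongly rigid metric inducing its topology. -/
theorem stmt11 {X : Type} [TopologicalSpace X] [TopologicalSpace.MetrizableSpace X]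
    (hX : StronglyZeroDim X) :
    Cardinal.mk X ≤ Cardinal.continuum ↔ ∃ d : MetricOn X, StronglyRigid d := by
  constructor
  · intro hcard
    letI : MetricSpace X := TopologicalSpace.metrizableSpaceMetric X
    exact Stmt11.exists_rigid hX hcard
  · rintro ⟨d, hd⟩
    rcases isEmpty_or_nonempty X with hE | hN
    · rw [Cardinal.mk_eq_zero X]
      exact Cardinal.zero_le _
    · obtain ⟨x₀⟩ := hN
      have hinj : Function.Injective (fun x => d.toFun x₀ x) := by
        intro a b hab
        simp only at hab
        by_cases h0 : d.toFun x₀ a = 0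
        · have ha := d.eq_of _ _ h0
          have hb := d.eq_of _ _ (by rw [← hab]; exact h0)
          rw [← ha, ← hb]
        · have hpair := hd x₀ a x₀ b hab h0
          have ha : a ∈ ({x₀, b} : Set X) := by
            rw [← hpair]
            simp
          rcases ha with ha | ha
          · exfalso
            apply h0
            rw [show a = x₀ from ha]
            exact d.refl x₀
          · exact ha
      calc Cardinal.mk X ≤ Cardinal.mk ℝ := Cardinal.mk_le_of_injective hinj
        _ = Cardinal.continuum := Cardinal.mk_real
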